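/- Let K be a field of characteristic zero, f ∈ K[x,y], and a ∈ K[x]. If f_x = a'(x) · f_y, then there exists a univariate polynomial g ∈ K[t] such that f(x,y) = g(y + a(x)). -/

import Mathlib

open MvPolynomial

/-- Coefficient formula for partial derivatives. -/
lemma coeff_pderiv_aux {K : Type*} [CommRing K] (i : Fin 2) (m : Fin 2 →₀ ℕ)
    (p : MvPolynomial (Fin 2) K) :
    coeff m (pderiv i p) = (m i + 1 : ℕ) * coeff (m + Finsupp.single i 1) p := by
  induction p using MvPolynomial.induction_on' with
  | monomial s c =>
    rw [pderiv_monomial, coeff_monomial, coeff_monomial]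
    by_cases h : s = m + Finsupp.single i 1
    · subst h
      rw [if_pos (add_tsub_cancel_right _ _), if_pos rfl]
      simp only [Finsupp.add_apply, Finsupp.single_eq_same]
      push_cast
      ring
    · rw [if_neg h, mul_zero]
      by_cases h' : s - Finsupp.single i 1 = m
      · rw [if_pos h']
        rcases Nat.eq_zero_or_pos (s i) with hs | hs
        · simp [hs]
        · exfalso
          apply h
          rw [← h', tsub_add_cancel_of_le]
          intro j
          rcases eq_or_ne j i with rfl | hj
          · simpa using Nat.one_le_iff_ne_zero.mpr hs.ne'
          · simp [Finsupp.single_apply, hj.symm]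
      · rw [if_neg h']
  | add p q hp hq =>
    simp [hp, hq, mul_add]

/-- Chain rule for the substitution `y ↦ y - A(x)`. -/
lemma chain_aux {K : Type*} [CommRing K] (A : MvPolynomial (Fin 2) K)
    (hA : pderiv (1 : Fin 2) A = 0) (p : MvPolynomial (Fin 2) K) :
    pderiv (0 : Fin 2) (bind₁ ![X 0, X 1 - A] p)
      = bind₁ ![X 0, X 1 - A] (pderiv 0 p)
        - pderiv (0 : Fin 2) A * bind₁ ![X 0, X 1 - A] (pderiv 1 p)
    ∧ pderiv (1 : Fin 2) (bind₁ ![X 0, X 1 - A] p)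
      = bind₁ ![X 0, X 1 - A] (pderiv 1 p) := by
  induction p using MvPolynomial.induction_on with
  | C c => simp
  | add p q hp hq =>
    constructor <;> simp [hp.1, hp.2, hq.1, hq.2, mul_add] <;> ring
  | mul_X p j hp =>
    fin_cases j <;>
      constructor <;>
        simp [pderiv_mul, hp.1, hp.2, hA] <;> ring


/-- If `f ∈ K[x,y]` satisfies `f_x = a'(x)·f_y` for some `a ∈ K[x]`, then
`f = g(y + a(x))` for some univariate `g ∈ K[t]`. -/
theorem stmt_7 (K : Type*) [Field K] [CharZero K]
    (f : MvPolynomial (Fin 2) K) (a : Polynomial K)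
    (heq : pderiv (0 : Fin 2) f =
      Polynomial.aeval (MvPolynomial.X (0 : Fin 2)) (Polynomial.derivative a)
        * pderiv (1 : Fin 2) f) :
    ∃ g : Polynomial K,
      f = Polynomial.aeval
        (MvPolynomial.X (1 : Fin 2) + Polynomial.aeval (MvPolynomial.X (0 : Fin 2)) a) g := by
  set A : MvPolynomial (Fin 2) K := Polynomial.aeval (X 0) a with hAdef
  have hA1 : pderiv (1 : Fin 2) A = 0 := by
    rw [hAdef, Derivation.map_aeval]
    simp
  have hA0 : pderiv (0 : Fin 2) A = Polynomial.aeval (X 0) (Polynomial.derivative a) := by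
    rw [hAdef, Derivation.map_aeval]
    simp
  set T : MvPolynomial (Fin 2) K →ₐ[K] MvPolynomial (Fin 2) K := aeval ![X 0, X 1 - A] with hT
  set S : MvPolynomial (Fin 2) K →ₐ[K] MvPolynomial (Fin 2) K := aeval ![X 0, X 1 + A] with hS
  have hSA : S A = A := by
    rw [hAdef, ← Polynomial.aeval_algHom_apply]
    simp [hS]
  have hSA' : bind₁ ![X 0, X 1 + A] A = A := by
    rw [← aeval_eq_bind₁, ← hS]
    exact hSA
  have hTA' : T (Polynomial.aeval (X 0) (Polynomial.derivative a))
      = Polynomial.aeval (X 0) (Polynomial.derivative a) := by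
    rw [← Polynomial.aeval_algHom_apply]
    simp [hT]
  -- h = f(x, y - a(x)) has zero x-derivative
  set h : MvPolynomial (Fin 2) K := T f with hh
  have hd0 : pderiv (0 : Fin 2) h = 0 := by
    rw [hh, hT, aeval_eq_bind₁, (chain_aux A hA1 f).1, heq, map_mul,
      ← aeval_eq_bind₁, ← hT, hTA', hA0]
    ring
  -- hence 0 is not among its variables
  have hvars : (0 : Fin 2) ∉ h.vars := by
    intro hmem
    rw [mem_vars] at hmem
    obtain ⟨d, hd, hd0'⟩ := hmem
    rw [Finsupp.mem_support_iff] at hd0'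
    have hle : Finsupp.single (0 : Fin 2) 1 ≤ d := by
      intro j
      rcases eq_or_ne j 0 with rfl | hj
      · simpa using Nat.one_le_iff_ne_zero.mpr hd0'
      · simp [Finsupp.single_apply, hj.symm]
    have := coeff_pderiv_aux (0 : Fin 2) (d - Finsupp.single 0 1) h
    rw [hd0, tsub_add_cancel_of_le hle, coeff_zero] at this
    have hcoeff : coeff d h = 0 := by
      rcases mul_eq_zero.mp this.symm with h1 | h1
      · exact absurd h1 (Nat.cast_ne_zero.mpr (Nat.succ_ne_zero _))
      · exact h1
    exact (MvPolynomial.mem_support_iff.mp hd) hcoeff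
  -- so h is a polynomial in y alone
  obtain ⟨q, hq⟩ := h.exists_rename_eq_of_vars_subset_range (fun _ : Unit => (1 : Fin 2))
    (fun _ _ _ => rfl) (by
      intro j hj
      refine ⟨(), ?_⟩
      fin_cases j
      · exact absurd hj hvars
      · rfl)
  refine ⟨pUnitAlgEquiv K q, ?_⟩
  have hren : (rename (fun _ : Unit => (1 : Fin 2)) : MvPolynomial Unit K →ₐ[K] _)
      = (Polynomial.aeval (X 1 : MvPolynomial (Fin 2) K)).comp (pUnitAlgEquiv K).toAlgHom := by
    apply MvPolynomial.algHom_ext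
    intro i
    simp
  have hgh : h = Polynomial.aeval (X 1 : MvPolynomial (Fin 2) K) (pUnitAlgEquiv K q) := by
    rw [← hq, hren]
    rfl
  have hST : S.comp T = AlgHom.id K _ := by
    apply MvPolynomial.algHom_ext
    intro i
    fin_cases i <;> simp [hS, hT, hSA']
  have hf : f = S h := by
    rw [hh]
    have := congrArg (fun φ => φ f) hST
    simpa using this.symm
  rw [hf, hgh, ← Polynomial.aeval_algHom_apply]
  congr 1
  simp [hS]
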